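/- Every peripheral eigenvalue of a quantum channel is semisimple: if |λ| = 1 and λ ∈ spec(Φ), then ker(Φ − λ·1)² = ker(Φ − λ·1), i.e. the eigennilpotent associated to λ vanishes. -/

import Mathlib

open Matrix
open scoped ComplexOrder

/-- The algebra of `d × d` complex matrices. -/
abbrev Mat (d : ℕ) := Matrix (Fin d) (Fin d) ℂ

/-- A linear map on matrices is positive if it maps positive semidefinite matrices to
positive semidefinite matrices. -/
def IsPositiveMap {d : ℕ} (Φ : Module.End ℂ (Mat d)) : Prop :=
  ∀ X : Mat d, X.PosSemidef → (Φ X).PosSemidef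

/-- A linear map on matrices is trace-preserving. -/
def IsTracePreserving {d : ℕ} (Φ : Module.End ℂ (Mat d)) : Prop :=
  ∀ X : Mat d, (Φ X).trace = X.trace

/-- The block-wise application `(Φ ⊗ id_n)(X)` of `Φ` to a matrix on `ℂ^d ⊗ ℂ^n`. -/
def blockApply {d : ℕ} (Φ : Module.End ℂ (Mat d)) (n : ℕ)
    (X : Matrix (Fin d × Fin n) (Fin d × Fin n) ℂ) :
    Matrix (Fin d × Fin n) (Fin d × Fin n) ℂ :=
  Matrix.of fun p q => Φ (Matrix.of fun i j => X (i, p.2) (j, q.2)) p.1 q.1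

/-- Complete positivity: `Φ ⊗ id_n` is positive for every `n`. -/
def IsCompletelyPositive {d : ℕ} (Φ : Module.End ℂ (Mat d)) : Prop :=
  ∀ (n : ℕ) (X : Matrix (Fin d × Fin n) (Fin d × Fin n) ℂ),
    X.PosSemidef → (blockApply Φ n X).PosSemidef

/-- The attractor (peripheral) subspace: the span of eigenvectors corresponding to
eigenvalues of modulus one. -/
noncomputable def attrSubspace {d : ℕ} (Φ : Module.End ℂ (Mat d)) : Submodule ℂ (Mat d) :=
  ⨆ (μ : ℂ) (_ : ‖μ‖ = 1), Module.End.eigenspace Φ μ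

section Aux

variable {d : ℕ}

lemma star_single (i : Fin d) (c : ℂ) :
    star (Pi.single i c : Fin d → ℂ) = Pi.single i (starRingEnd ℂ c) := by
  funext k
  by_cases h : k = i
  · subst h; simp
  · simp [Pi.single_apply, h]

lemma psd_diag_nonneg {A : Mat d} (hA : A.PosSemidef) (k : Fin d) :
    0 ≤ (A k k).re ∧ (A k k).im = 0 := by
  have h := hA.dotProduct_mulVec_nonneg (Pi.single k 1)
  have he : dotProduct (star (Pi.single k 1 : Fin d → ℂ)) (A *ᵥ Pi.single k 1) = A k k := by
    rw [star_single, RingHom.map_one, mulVec_single, single_dotProduct]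
    simp
  rw [he, Complex.nonneg_iff] at h
  exact ⟨h.1, h.2.symm⟩

lemma psd_trace_re_nonneg {A : Mat d} (hA : A.PosSemidef) : 0 ≤ A.trace.re := by
  rw [Matrix.trace, Complex.re_sum]
  exact Finset.sum_nonneg fun k _ => (psd_diag_nonneg hA k).1

lemma psd_entry_abs_le_trace_re {A : Mat d} (hA : A.PosSemidef) (i j : Fin d) :
    ‖A i j‖ ≤ A.trace.re := by
  have htr : A.trace.re = ∑ k, (A k k).re := by rw [Matrix.trace, Complex.re_sum]; rfl
  have hdg : ∀ k, 0 ≤ (A k k).re := fun k => (psd_diag_nonneg hA k).1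
  by_cases hij : i = j
  · subst hij
    have him : (A i i).im = 0 := (psd_diag_nonneg hA i).2
    have habs : ‖A i i‖ = (A i i).re := by
      rw [← Complex.re_add_im (A i i), him]
      simp [abs_of_nonneg (hdg i)]
    rw [habs, htr]
    exact Finset.single_le_sum (fun k _ => hdg k) (Finset.mem_univ i)
  · by_cases h0 : A i j = 0
    · rw [h0, norm_zero]; exact psd_trace_re_nonneg hA
    · set a := A i j with ha
      set r : ℝ := ‖a‖ with hr
      have hrpos : 0 < r := by
        rw [hr]; exact (norm_pos_iff.mpr h0)
      set c : ℂ := -(starRingEnd ℂ a) / (r : ℂ) with hc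
      have hrne : (r : ℂ) ≠ 0 := by
        exact_mod_cast hrpos.ne'
      have hnorm : a * starRingEnd ℂ a = ((r ^ 2 : ℝ) : ℂ) := by
        rw [Complex.mul_conj]
        rw [hr, Complex.sq_norm]
      have hji : A j i = starRingEnd ℂ a := by
        have := congrFun (congrFun hA.1 j) i
        rw [Matrix.conjTranspose_apply] at this
        rw [← this, ha]; rfl
      have h := hA.dotProduct_mulVec_nonneg (Pi.single i 1 + Pi.single j c)
      have hveq : A *ᵥ (Pi.single i 1 + Pi.single j c)
          = fun k => A k i + A k j * c := by
        rw [Matrix.mulVec_add, mulVec_single, mulVec_single]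
        funext k; simp [mul_comm]
      have hq : dotProduct (star (Pi.single i 1 + Pi.single j c))
          (A *ᵥ (Pi.single i 1 + Pi.single j c))
          = A i i + A j j - 2 * (r : ℂ) := by
        have hcc : starRingEnd ℂ c = -a / (r : ℂ) := by
          rw [hc]; simp [map_div₀, Complex.conj_ofReal]
        have hac : a * c = -((r : ℝ) : ℂ) := by
          rw [hc]
          field_simp
          rw [hnorm]; push_cast; ring
        have hca : starRingEnd ℂ c * starRingEnd ℂ a = -((r : ℝ) : ℂ) := by
          rw [hcc]
          field_simp
          rw [hnorm]; push_cast; ring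
        have hcc1 : starRingEnd ℂ c * c = 1 := by
          rw [hcc, hc]
          field_simp
          rw [hnorm]; push_cast; ring
        rw [hveq, star_add, star_single, star_single, add_dotProduct,
          single_dotProduct, single_dotProduct, RingHom.map_one, hji]
        rw [show (starRingEnd ℂ) c * ((starRingEnd ℂ) a + A j j * c)
            = (starRingEnd ℂ) c * (starRingEnd ℂ) a + ((starRingEnd ℂ) c * c) * A j j by ring]
        rw [hac, hca, hcc1]
        ring
      rw [hq, Complex.nonneg_iff] at h
      have hre : 0 ≤ (A i i).re + (A j j).re - 2 * r := by
        simpa [Complex.sub_re, Complex.add_re, Complex.ofReal_re] using h.1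
      have hsum : (A i i).re + (A j j).re ≤ A.trace.re := by
        rw [htr]
        have : ∑ k ∈ ({i, j} : Finset (Fin d)), (A k k).re
            = (A i i).re + (A j j).re := Finset.sum_pair hij
        rw [← this]
        exact Finset.sum_le_sum_of_subset_of_nonneg (Finset.subset_univ _)
          (fun k _ _ => hdg k)
      have : r ≤ A.trace.re := by
        nlinarith [psd_trace_re_nonneg hA]
      simpa [hr] using this

lemma herm_decomp {H : Mat d} (hH : H.IsHermitian) :
    ∃ P N : Mat d, P.PosSemidef ∧ N.PosSemidef ∧ H = P - N := by
  set U : Mat d := (Matrix.IsHermitian.eigenvectorUnitary hH : Mat d) with hU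
  set e : Fin d → ℝ := hH.eigenvalues with he
  refine ⟨U * Matrix.diagonal (fun k => ((max (e k) 0 : ℝ) : ℂ)) * Uᴴ,
    U * Matrix.diagonal (fun k => ((max (-(e k)) 0 : ℝ) : ℂ)) * Uᴴ, ?_, ?_, ?_⟩
  · exact (Matrix.PosSemidef.diagonal (fun k => by
      simpa using Complex.zero_le_real.2 (le_max_right (e k) 0))).mul_mul_conjTranspose_same U
  · exact (Matrix.PosSemidef.diagonal (fun k => by
      simpa using Complex.zero_le_real.2 (le_max_right (-(e k)) 0))).mul_mul_conjTranspose_same U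
  · have hspec := hH.spectral_theorem
    rw [← Matrix.sub_mul, ← Matrix.mul_sub]
    have hdd : Matrix.diagonal (fun k => ((max (e k) 0 : ℝ) : ℂ))
        - Matrix.diagonal (fun k => ((max (-(e k)) 0 : ℝ) : ℂ))
        = Matrix.diagonal (RCLike.ofReal ∘ hH.eigenvalues) := by
      rw [Matrix.diagonal_sub]
      apply congrArg Matrix.diagonal
      funext k
      show ((max (e k) 0 : ℝ) : ℂ) - ((max (-(e k)) 0 : ℝ) : ℂ) = _
      rw [← Complex.ofReal_sub, max_zero_sub_max_neg_zero_eq_self]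
      rfl
    rw [hdd, ← Matrix.star_eq_conjTranspose]
    exact hspec

end Aux


section Main
variable {d : ℕ}

lemma posMap_of_CP {Φ : Module.End ℂ (Mat d)} (hCP : IsCompletelyPositive Φ) :
    IsPositiveMap Φ := by
  intro X hX
  have h := hCP 1 (X.submatrix Prod.fst Prod.fst) (hX.submatrix _)
  have heq : Φ X = (blockApply Φ 1 (X.submatrix Prod.fst Prod.fst)).submatrix
      (fun i => (i, (0 : Fin 1))) (fun i => (i, (0 : Fin 1))) := rfl
  rw [heq]
  exact h.submatrix _

lemma posMap_pow {Φ : Module.End ℂ (Mat d)} (hP : IsPositiveMap Φ) (n : ℕ) :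
    IsPositiveMap (Φ ^ n) := by
  induction n with
  | zero => intro X hX; simpa using hX
  | succ n ih =>
    intro X hX
    rw [pow_succ, Module.End.mul_apply]
    exact ih _ (hP _ hX)

lemma tp_pow {Φ : Module.End ℂ (Mat d)} (hT : IsTracePreserving Φ) (n : ℕ) :
    IsTracePreserving (Φ ^ n) := by
  induction n with
  | zero => intro X; simp
  | succ n ih =>
    intro X
    rw [pow_succ, Module.End.mul_apply, ih, hT]

lemma exists_psd_decomp (X : Mat d) :
    ∃ P₁ P₂ P₃ P₄ : Mat d, P₁.PosSemidef ∧ P₂.PosSemidef ∧ P₃.PosSemidef ∧ P₄.PosSemidef ∧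
      X = P₁ - P₂ + Complex.I • P₃ - Complex.I • P₄ := by
  have hH : ((1 / 2 : ℂ) • (X + Xᴴ)).IsHermitian := by
    unfold Matrix.IsHermitian
    rw [Matrix.conjTranspose_smul, Matrix.conjTranspose_add, Matrix.conjTranspose_conjTranspose]
    rw [show star (1 / 2 : ℂ) = 1 / 2 by norm_num]
    rw [add_comm]
  have hK : ((-(Complex.I) / 2 : ℂ) • (X - Xᴴ)).IsHermitian := by
    unfold Matrix.IsHermitian
    rw [Matrix.conjTranspose_smul, Matrix.conjTranspose_sub, Matrix.conjTranspose_conjTranspose]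
    rw [show star (-(Complex.I) / 2 : ℂ) = Complex.I / 2 by
      simp [star_div₀, Complex.star_def, Complex.conj_I]]
    rw [show (Complex.I / 2) • (Xᴴ - X) = (-(Complex.I) / 2 : ℂ) • (X - Xᴴ) by
      rw [neg_div, neg_smul, ← smul_neg, neg_sub]]
  obtain ⟨P₁, P₂, h1, h2, hHd⟩ := herm_decomp hH
  obtain ⟨P₃, P₄, h3, h4, hKd⟩ := herm_decomp hK
  refine ⟨P₁, P₂, P₃, P₄, h1, h2, h3, h4, ?_⟩
  have : X = (1 / 2 : ℂ) • (X + Xᴴ) + Complex.I • ((-(Complex.I) / 2 : ℂ) • (X - Xᴴ)) := by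
    rw [smul_smul]
    rw [show Complex.I * (-(Complex.I) / 2) = 1 / 2 by
      linear_combination (-1 / 2 : ℂ) * Complex.I_sq]
    rw [smul_add, smul_sub, ← add_sub_assoc]
    rw [show (1/2 : ℂ) • X + (1/2 : ℂ) • Xᴴ + (1/2 : ℂ) • X - (1/2 : ℂ) • Xᴴ
        = ((1:ℂ)/2 + 1/2) • X by rw [add_smul]; abel]
    norm_num
  rw [this, hHd, hKd, smul_sub]
  abel

lemma jordan_pow {Φ : Module.End ℂ (Mat d)} {μ : ℂ} (hμ : μ ≠ 0) {X Y : Mat d}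
    (hX : Φ X = μ • X + Y) (hY : Φ Y = μ • Y) (n : ℕ) :
    (Φ ^ n) X = (μ ^ n) • X + ((n : ℂ) * μ ^ n * μ⁻¹) • Y := by
  induction n with
  | zero => simp
  | succ n ih =>
    rw [pow_succ', Module.End.mul_apply, ih, map_add, LinearMap.map_smul, LinearMap.map_smul, hX, hY,
      smul_add, smul_smul, smul_smul]
    rw [add_assoc, ← add_smul, pow_succ]
    push_cast
    rw [show (μ ^ n + (n : ℂ) * μ ^ n * μ⁻¹ * μ) = (((n : ℂ) + 1) * (μ ^ n * μ) * μ⁻¹) from by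
      field_simp; ring]

end Main

/-- Every peripheral eigenvalue of a quantum channel is semisimple:
if `|μ| = 1` and `μ ∈ spec(Φ)` then `ker (Φ - μ·1)² = ker (Φ - μ·1)`. -/
theorem peripheral_eigenvalue_semisimple
    (d : ℕ) (Φ : Module.End ℂ (Mat d))
    (hCP : IsCompletelyPositive Φ) (hTP : IsTracePreserving Φ)
    (μ : ℂ) (habs : ‖μ‖ = 1) (hspec : μ ∈ spectrum ℂ Φ) :
    LinearMap.ker ((Φ - μ • (1 : Module.End ℂ (Mat d))) ∘ₗ
        (Φ - μ • (1 : Module.End ℂ (Mat d)))) =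
      LinearMap.ker (Φ - μ • (1 : Module.End ℂ (Mat d))) := by
  set T := Φ - μ • (1 : Module.End ℂ (Mat d)) with hTdef
  apply le_antisymm
  · intro X hX
    rw [LinearMap.mem_ker, LinearMap.comp_apply] at hX
    rw [LinearMap.mem_ker]
    by_contra hY0
    set Y := T X with hYdef
    have hμ : μ ≠ 0 := by
      intro h
      rw [h, norm_zero] at habs
      exact zero_ne_one habs
    have hTapp : ∀ Z : Mat d, T Z = Φ Z - μ • Z := by
      intro Z
      simp [hTdef, LinearMap.sub_apply, LinearMap.smul_apply]
    have hY : Φ Y = μ • Y := by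
      have hTY : T Y = 0 := hX
      rw [hTapp] at hTY
      rw [sub_eq_zero] at hTY
      exact hTY
    have hXe : Φ X = μ • X + Y := by
      rw [hYdef, hTapp]
      abel
    obtain ⟨i, j, hij⟩ : ∃ i j, Y i j ≠ 0 := by
      by_contra hc
      push_neg at hc
      exact hY0 (by ext i j; simpa using hc i j)
    have hPos := posMap_of_CP hCP
    obtain ⟨P₁, P₂, P₃, P₄, h1, h2, h3, h4, hdec⟩ := exists_psd_decomp X
    set C : ℝ := P₁.trace.re + P₂.trace.re + P₃.trace.re + P₄.trace.re with hC
    have habs_sub : ∀ x y : ℂ, ‖x - y‖ ≤ ‖x‖ + ‖y‖ := by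
      intro x y
      simpa [sub_eq_add_neg] using norm_add_le x (-y)
    have hbound : ∀ n : ℕ, ‖((Φ ^ n) X) i j‖ ≤ C := by
      intro n
      have hexp : (Φ ^ n) X = (Φ ^ n) P₁ - (Φ ^ n) P₂ + Complex.I • (Φ ^ n) P₃
          - Complex.I • (Φ ^ n) P₄ := by
        rw [hdec, map_sub, map_add, map_sub, LinearMap.map_smul, LinearMap.map_smul]
      have hent : ((Φ ^ n) X) i j
          = ((Φ ^ n) P₁) i j - ((Φ ^ n) P₂) i j + Complex.I * ((Φ ^ n) P₃) i j
            - Complex.I * ((Φ ^ n) P₄) i j := by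
        rw [hexp]
        simp [Matrix.sub_apply, Matrix.add_apply, Matrix.smul_apply, smul_eq_mul]
      have t1 := psd_entry_abs_le_trace_re (posMap_pow hPos n _ h1) i j
      have t2 := psd_entry_abs_le_trace_re (posMap_pow hPos n _ h2) i j
      have t3 := psd_entry_abs_le_trace_re (posMap_pow hPos n _ h3) i j
      have t4 := psd_entry_abs_le_trace_re (posMap_pow hPos n _ h4) i j
      rw [tp_pow hTP n P₁] at t1
      rw [tp_pow hTP n P₂] at t2
      rw [tp_pow hTP n P₃] at t3
      rw [tp_pow hTP n P₄] at t4
      have step1 : ‖((Φ ^ n) X) i j‖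
          ≤ ‖((Φ ^ n) P₁) i j - ((Φ ^ n) P₂) i j
              + Complex.I * ((Φ ^ n) P₃) i j‖
            + ‖Complex.I * ((Φ ^ n) P₄) i j‖ := by
        rw [hent]
        exact habs_sub _ _
      have step2 : ‖((Φ ^ n) P₁) i j - ((Φ ^ n) P₂) i j
              + Complex.I * ((Φ ^ n) P₃) i j‖
          ≤ ‖((Φ ^ n) P₁) i j - ((Φ ^ n) P₂) i j‖
            + ‖Complex.I * ((Φ ^ n) P₃) i j‖ :=
        norm_add_le _ _
      have step3 : ‖((Φ ^ n) P₁) i j - ((Φ ^ n) P₂) i j‖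
          ≤ ‖((Φ ^ n) P₁) i j‖ + ‖((Φ ^ n) P₂) i j‖ :=
        habs_sub _ _
      have hI3 : ‖Complex.I * ((Φ ^ n) P₃) i j‖
          = ‖((Φ ^ n) P₃) i j‖ := by
        rw [norm_mul, Complex.norm_I, one_mul]
      have hI4 : ‖Complex.I * ((Φ ^ n) P₄) i j‖
          = ‖((Φ ^ n) P₄) i j‖ := by
        rw [norm_mul, Complex.norm_I, one_mul]
      rw [hI3] at step2
      rw [hI4] at step1
      rw [hC]
      linarith
    have hform := jordan_pow hμ hXe hY
    have hgrow : ∀ n : ℕ, (n : ℝ) * ‖Y i j‖ ≤ C + ‖X i j‖ := by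
      intro n
      have h := hbound n
      rw [hform n] at h
      have hentry : ((μ ^ n • X + ((n : ℂ) * μ ^ n * μ⁻¹) • Y) i j)
          = μ ^ n * X i j + ((n : ℂ) * μ ^ n * μ⁻¹) * Y i j := by
        simp [Matrix.add_apply, Matrix.smul_apply, smul_eq_mul]
      rw [hentry] at h
      have habs1 : ‖μ ^ n * X i j‖ = ‖X i j‖ := by
        rw [norm_mul, norm_pow, habs, one_pow, one_mul]
      have habs2 : ‖((n : ℂ) * μ ^ n * μ⁻¹) * Y i j‖
          = (n : ℝ) * ‖Y i j‖ := by
        rw [norm_mul, norm_mul, norm_mul, norm_pow, norm_inv, habs]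
        simp
      have hlow : (n : ℝ) * ‖Y i j‖
          ≤ ‖μ ^ n * X i j + ((n : ℂ) * μ ^ n * μ⁻¹) * Y i j‖
            + ‖μ ^ n * X i j‖ := by
        rw [← habs2]
        have := habs_sub (μ ^ n * X i j + ((n : ℂ) * μ ^ n * μ⁻¹) * Y i j) (μ ^ n * X i j)
        simpa using this
      rw [habs1] at hlow
      linarith
    have hypos : 0 < ‖Y i j‖ := norm_pos_iff.mpr hij
    obtain ⟨n, hn⟩ := exists_nat_gt ((C + ‖X i j‖) / ‖Y i j‖)
    rw [div_lt_iff₀ hypos] at hn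
    have := hgrow n
    linarith
  · intro X hX
    rw [LinearMap.mem_ker] at hX
    rw [LinearMap.mem_ker, LinearMap.comp_apply, hX, map_zero]
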